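/- Let K ⊆ M_ξ Σ and L ⊆ M_ζ Σ be languages over the same alphabet, where K has a syntactic algebra. Then the following are equivalent: (1) ≼_K ⊆ ≼_L; (2) the syntactic morphism syn_K recognises L; (3) every morphism recognising K also recognises L; (4) L is a finite union of finite intersections of derivatives of K, i.e., L = ⋃_{i<m} ⋂_{k<n_i} p_{ik}⁻¹[K] for suitable contexts p_{ik} ∈ M(Σ+□). -/

import Mathlib

/-- An object of `Pos`: a type equipped with a partial order. -/
structure Pos : Type 1 where
  car : Type
  po : PartialOrder car

attribute [instance] Pos.po

/-- Monotone maps between objects of `Pos`. -/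
structure PHom (A B : Pos) where
  f : A.car → B.car
  mono : Monotone f

def PHom.id (A : Pos) : PHom A A := ⟨fun a => a, fun _ _ h => h⟩

def PHom.comp {A B C : Pos} (g : PHom B C) (f : PHom A B) : PHom A C :=
  ⟨fun a => g.f (f.f a), fun _ _ h => g.mono (f.mono h)⟩

/-- A monad on the category `Pos` of partially ordered sets and monotone maps. -/
structure OMonad : Type 1 where
  obj : Pos → Pos
  map : {A B : Pos} → PHom A B → PHom (obj A) (obj B)
  map_id : ∀ A : Pos, map (PHom.id A) = PHom.id (obj A)
  map_comp : ∀ {A B C : Pos} (f : PHom A B) (g : PHom B C),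
      map (g.comp f) = (map g).comp (map f)
  sing : ∀ A : Pos, PHom A (obj A)
  flat : ∀ A : Pos, PHom (obj (obj A)) (obj A)
  sing_nat : ∀ {A B : Pos} (f : PHom A B), (map f).comp (sing A) = (sing B).comp f
  flat_nat : ∀ {A B : Pos} (f : PHom A B),
      (map f).comp (flat A) = (flat B).comp (map (map f))
  flat_sing : ∀ A, (flat A).comp (sing (obj A)) = PHom.id (obj A)
  flat_map_sing : ∀ A, (flat A).comp (map (sing A)) = PHom.id (obj A)
  flat_assoc : ∀ A, (flat A).comp (flat (obj A)) = (flat A).comp (map (flat A))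

/-- An Eilenberg–Moore algebra for the monad `M`. -/
structure OAlg (M : OMonad) where
  A : Pos
  pi : PHom (M.obj A) A
  unit_law : pi.comp (M.sing A) = PHom.id A
  assoc_law : pi.comp (M.map pi) = pi.comp (M.flat A)

/-- A morphism of Eilenberg–Moore algebras. -/
structure OAlgHom {M : OMonad} (X Y : OAlg M) where
  h : PHom X.A Y.A
  comm : h.comp X.pi = Y.pi.comp (M.map h)

def OAlgHom.comp {M : OMonad} {X Y Z : OAlg M} (g : OAlgHom Y Z) (f : OAlgHom X Y) :
    OAlgHom X Z :=
  ⟨g.h.comp f.h, by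
    calc (g.h.comp f.h).comp X.pi = g.h.comp (f.h.comp X.pi) := rfl
      _ = g.h.comp (Y.pi.comp (M.map f.h)) := by rw [f.comm]
      _ = (g.h.comp Y.pi).comp (M.map f.h) := rfl
      _ = (Z.pi.comp (M.map g.h)).comp (M.map f.h) := by rw [g.comm]
      _ = Z.pi.comp ((M.map g.h).comp (M.map f.h)) := rfl
      _ = Z.pi.comp (M.map (g.h.comp f.h)) := by rw [← M.map_comp]⟩

/-- The free `M`-algebra over `A`, carried by `M A` with product `flat`. -/
def OMonad.free (M : OMonad) (A : Pos) : OAlg M :=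
  ⟨M.obj A, M.flat A, M.flat_sing A, (M.flat_assoc A).symm⟩

/- Sub-posets, products, relations as sub-posets of products. -/

def Pos.sub (A : Pos) (S : Set A.car) : Pos := ⟨{a : A.car // a ∈ S}, inferInstance⟩

def subIncl (A : Pos) (S : Set A.car) : PHom (A.sub S) A := ⟨fun a => a.val, fun _ _ h => h⟩

def Pos.prod (A B : Pos) : Pos := ⟨A.car × B.car, inferInstance⟩

def prodFst (A B : Pos) : PHom (A.prod B) A := ⟨Prod.fst, fun _ _ h => h.1⟩
def prodSnd (A B : Pos) : PHom (A.prod B) B := ⟨Prod.snd, fun _ _ h => h.2⟩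

/-- A relation `r` on `A`, as a sub-poset of `A × A`. -/
def relPos (A : Pos) (r : A.car → A.car → Prop) : Pos :=
  ⟨{p : A.car × A.car // r p.1 p.2}, inferInstance⟩

def relFst (A : Pos) (r : A.car → A.car → Prop) : PHom (relPos A r) A :=
  ⟨fun p => p.val.1, fun _ _ h => h.1⟩
def relSnd (A : Pos) (r : A.car → A.car → Prop) : PHom (relPos A r) A :=
  ⟨fun p => p.val.2, fun _ _ h => h.2⟩

/- The standing convention on the monad `M`. -/

def PreservesInj (M : OMonad) : Prop :=
  ∀ {A B : Pos} (f : PHom A B), Function.Injective f.f → Function.Injective (M.map f).f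
def PreservesSurj (M : OMonad) : Prop :=
  ∀ {A B : Pos} (f : PHom A B), Function.Surjective f.f → Function.Surjective (M.map f).f
def PreservesBij (M : OMonad) : Prop :=
  ∀ {A B : Pos} (f : PHom A B), Function.Bijective f.f → Function.Bijective (M.map f).f
def PreservesPre (M : OMonad) : Prop :=
  ∀ {A B : Pos} (f : PHom A B) (S : Set B.car),
    Set.range (M.map (subIncl A (f.f ⁻¹' S))).f
      = (M.map f).f ⁻¹' Set.range (M.map (subIncl B S)).f

/-- `M` uses the standard ordering: the order on `M A` is the lift of the order on `A`. -/
def UsesStdOrder (M : OMonad) : Prop :=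
  ∀ (A : Pos) (s t : (M.obj A).car),
    s ≤ t ↔ ∃ u : (M.obj (relPos A (fun a b => a ≤ b))).car,
      (M.map (relFst A (fun a b => a ≤ b))).f u = s ∧
      (M.map (relSnd A (fun a b => a ≤ b))).f u = t

/-- The standing convention of the paper. -/
def Convention (M : OMonad) : Prop :=
  PreservesInj M ∧ PreservesSurj M ∧ PreservesBij M ∧ PreservesPre M ∧ UsesStdOrder M

/- Quotients by preorders containing the order. -/

/-- A preorder on (the carrier of) `A` containing the partial order of `A`. -/
structure PreCong (A : Pos) where
  r : A.car → A.car → Prop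
  refl : ∀ a, r a a
  trans : ∀ a b c, r a b → r b c → r a c
  le_sub : ∀ a b : A.car, a ≤ b → r a b

def PreCong.setoid {A : Pos} (co : PreCong A) : Setoid A.car where
  r a b := co.r a b ∧ co.r b a
  iseqv := ⟨fun a => ⟨co.refl a, co.refl a⟩, fun h => ⟨h.2, h.1⟩,
    fun h1 h2 => ⟨co.trans _ _ _ h1.1 h2.1, co.trans _ _ _ h2.2 h1.2⟩⟩

/-- The quotient poset `A/⊑`. -/
def quotPos {A : Pos} (co : PreCong A) : Pos where
  car := Quotient co.setoid
  po :=
    { le := Quotient.lift₂ co.r (fun a b a' b' ha hb => propext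
        ⟨fun h => co.trans _ _ _ ha.2 (co.trans _ _ _ h hb.1),
         fun h => co.trans _ _ _ ha.1 (co.trans _ _ _ h hb.2)⟩)
      le_refl := fun q => Quotient.inductionOn q co.refl
      le_trans := by
        intro q1 q2 q3
        refine Quotient.inductionOn₃ q1 q2 q3 ?_
        intro a b d h1 h2
        exact co.trans a b d h1 h2
      le_antisymm := by
        intro q1 q2
        refine Quotient.inductionOn₂ q1 q2 ?_
        intro a b h1 h2
        exact Quotient.sound ⟨h1, h2⟩
      lt := fun q1 q2 => Quotient.lift₂ (s₁ := co.setoid) (s₂ := co.setoid) co.r (fun a b a' b' ha hb => propext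
          ⟨fun h => co.trans _ _ _ ha.2 (co.trans _ _ _ h hb.1),
           fun h => co.trans _ _ _ ha.1 (co.trans _ _ _ h hb.2)⟩) q1 q2 ∧
        ¬ Quotient.lift₂ (s₁ := co.setoid) (s₂ := co.setoid) co.r (fun a b a' b' ha hb => propext
          ⟨fun h => co.trans _ _ _ ha.2 (co.trans _ _ _ h hb.1),
           fun h => co.trans _ _ _ ha.1 (co.trans _ _ _ h hb.2)⟩) q2 q1
      lt_iff_le_not_ge := fun _ _ => Iff.rfl }

/-- The quotient map `A → A/⊑`. -/
def quotHom {A : Pos} (co : PreCong A) : PHom A (quotPos co) :=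
  ⟨fun a => Quotient.mk co.setoid a, fun a b h => co.le_sub a b h⟩

/-- `⊑` is a congruence ordering on the algebra `X`:
`s ⊑_M t` (i.e. `M q (s) ≤ M q (t)`) implies `π(s) ⊑ π(t)`. -/
def IsCongOrdP (M : OMonad) (X : OAlg M) (co : PreCong X.A) : Prop :=
  ∀ s t : (M.obj X.A).car,
    (M.map (quotHom co)).f s ≤ (M.map (quotHom co)).f t → co.r (X.pi.f s) (X.pi.f t)

/-- The relation `r` is a congruence ordering on the algebra `X`. -/
def IsCongruenceOrdering (M : OMonad) (X : OAlg M) (r : X.A.car → X.A.car → Prop) : Prop :=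
  ∃ (h1 : ∀ a, r a a) (h2 : ∀ a b c, r a b → r b c → r a c)
    (h3 : ∀ a b : X.A.car, a ≤ b → r a b),
    IsCongOrdP M X ⟨r, h1, h2, h3⟩

/- Contexts and syntactic congruences. -/

/-- `A + □`: the poset `A` extended by a single extra point `□`. -/
def Pos.addBox (A : Pos) : Pos := ⟨A.car ⊕ PUnit, inferInstance⟩

/-- The map `A + □ → A` substituting `a` for `□`. -/
def substHom (M : OMonad) (X : OAlg M) (a : X.A.car) : PHom X.A.addBox X.A :=
  ⟨fun z => Sum.elim (fun x => x) (fun _ => a) z, by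
    intro x y h
    cases h with
    | inl h => exact h
    | inr h => exact le_refl a⟩

/-- Evaluation `p[a]` of a context `p ∈ M(A + □)` at `a ∈ A`. -/
def ctxEval (M : OMonad) (X : OAlg M) (p : (M.obj X.A.addBox).car) (a : X.A.car) : X.A.car :=
  X.pi.f ((M.map (substHom M X a)).f p)

/-- The syntactic congruence `a ≼_K b` of a set `K`. -/
def synLe (M : OMonad) (X : OAlg M) (K : Set X.A.car) (a b : X.A.car) : Prop :=
  ∀ p : (M.obj X.A.addBox).car, ctxEval M X p a ∈ K → ctxEval M X p b ∈ K

def UpClosed (A : Pos) (K : Set A.car) : Prop :=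
  ∀ a b : A.car, a ∈ K → a ≤ b → b ∈ K

/-- The derivative `p⁻¹[K]` of `K` by the context `p`. -/
def ctxDeriv (M : OMonad) (X : OAlg M) (p : (M.obj X.A.addBox).car) (K : Set X.A.car) :
    Set X.A.car :=
  {a | ctxEval M X p a ∈ K}

/-- `A` carries the trivial (discrete) order. -/
def TrivOrder (A : Pos) : Prop := ∀ a b : A.car, a ≤ b → a = b

/-- A morphism from a free algebra recognises a language `K` if `K` is the preimage of
an upwards closed set. -/
def Recognises {M : OMonad} {Sg : Pos} {X : OAlg M} (φ : OAlgHom (M.free Sg) X)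
    (K : Set ((M.obj Sg).car)) : Prop :=
  ∃ P : Set X.A.car, UpClosed X.A P ∧ K = φ.h.f ⁻¹' P

/-- Embedding of `Σ + □` into `(M Σ) + □` via `sing`, used to view contexts over the
alphabet as contexts over the free algebra. -/
def singBox (M : OMonad) (Sg : Pos) : PHom Sg.addBox (M.obj Sg).addBox :=
  ⟨Sum.map (M.sing Sg).f (fun x => x), by
    intro x y h
    cases h with
    | inl h => exact Sum.LiftRel.inl ((M.sing Sg).mono h)
    | inr h => exact Sum.LiftRel.inr h⟩

/-- Evaluation of a context `p ∈ M(Σ + □)` at an element `s ∈ M Σ` of the free algebra. -/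
def freeCtxEval (M : OMonad) (Sg : Pos) (p : (M.obj Sg.addBox).car) (s : (M.obj Sg).car) :
    (M.obj Sg).car :=
  ctxEval M (M.free Sg) ((M.map (singBox M Sg)).f p) s

/- Finitary monads and algebras. -/

/-- `M` is finitary: it preserves directed unions. -/
def FinitaryM (M : OMonad) : Prop :=
  ∀ (A : Pos) (ι : Type) (D : ι → Set A.car), Directed (· ⊆ ·) D → (⋃ i, D i) = Set.univ →
    ∀ s : (M.obj A).car, ∃ i, ∃ s₀ : (M.obj (A.sub (D i))).car,
      (M.map (subIncl A (D i))).f s₀ = s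

/-- A finitary algebra: (sort-wise) finite universe and finitely generated. -/
def FinitaryAlg (M : OMonad) (X : OAlg M) : Prop :=
  Finite X.A.car ∧ ∃ C : Set X.A.car, C.Finite ∧
    ∀ a : X.A.car, ∃ s : (M.obj (X.A.sub C)).car, a = X.pi.f ((M.map (subIncl X.A C)).f s)
/-- A morphism of monads `M₀ ⇒ M₁`. -/
structure OMonadHom (M₀ M₁ : OMonad) where
  app : ∀ A : Pos, PHom (M₀.obj A) (M₁.obj A)
  naturality : ∀ {A B : Pos} (f : PHom A B),
      (app B).comp (M₀.map f) = (M₁.map f).comp (app A)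
  sing_comm : ∀ A : Pos, (app A).comp (M₀.sing A) = M₁.sing A
  flat_comm : ∀ A : Pos,
      (app A).comp (M₀.flat A)
        = (M₁.flat A).comp ((app (M₁.obj A)).comp (M₀.map (app A)))

/-- The `ρ`-reduct of an `M₁`-algebra: the `M₀`-algebra with product `π ∘ ρ`. -/
def OMonadHom.reduct {M₀ M₁ : OMonad} (ρ : OMonadHom M₀ M₁) (X : OAlg M₁) : OAlg M₀ where
  A := X.A
  pi := X.pi.comp (ρ.app X.A)
  unit_law := by
    calc (X.pi.comp (ρ.app X.A)).comp (M₀.sing X.A)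
        = X.pi.comp ((ρ.app X.A).comp (M₀.sing X.A)) := rfl
      _ = X.pi.comp (M₁.sing X.A) := by rw [ρ.sing_comm]
      _ = PHom.id X.A := X.unit_law
  assoc_law := by
    have hnat := ρ.naturality (X.pi.comp (ρ.app X.A))
    have hint := ρ.naturality (ρ.app X.A)
    calc (X.pi.comp (ρ.app X.A)).comp (M₀.map (X.pi.comp (ρ.app X.A)))
        = X.pi.comp ((ρ.app X.A).comp (M₀.map (X.pi.comp (ρ.app X.A)))) := rfl
      _ = X.pi.comp ((M₁.map (X.pi.comp (ρ.app X.A))).comp (ρ.app (M₀.obj X.A))) := by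
            rw [hnat]
      _ = (X.pi.comp (M₁.map (X.pi.comp (ρ.app X.A)))).comp (ρ.app (M₀.obj X.A)) := rfl
      _ = (X.pi.comp ((M₁.map X.pi).comp (M₁.map (ρ.app X.A)))).comp (ρ.app (M₀.obj X.A)) := by
            rw [M₁.map_comp]
      _ = ((X.pi.comp (M₁.map X.pi)).comp (M₁.map (ρ.app X.A))).comp (ρ.app (M₀.obj X.A)) := rfl
      _ = ((X.pi.comp (M₁.flat X.A)).comp (M₁.map (ρ.app X.A))).comp (ρ.app (M₀.obj X.A)) := by
            rw [X.assoc_law]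
      _ = X.pi.comp ((M₁.flat X.A).comp ((M₁.map (ρ.app X.A)).comp (ρ.app (M₀.obj X.A)))) := rfl
      _ = X.pi.comp ((M₁.flat X.A).comp ((ρ.app (M₁.obj X.A)).comp (M₀.map (ρ.app X.A)))) := by
            rw [hint]
      _ = X.pi.comp ((ρ.app X.A).comp (M₀.flat X.A)) := by rw [← ρ.flat_comm]
      _ = (X.pi.comp (ρ.app X.A)).comp (M₀.flat X.A) := rfl

/-- `ρ : M₀ ⇒ M₁` is dense over the class `C`. -/
def DenseOver {M₀ M₁ : OMonad} (ρ : OMonadHom M₀ M₁) (C : Set (OAlg M₁)) : Prop :=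
  ∀ X ∈ C, ∀ (S : Set X.A.car) (s : (M₁.obj (X.A.sub S)).car),
    ∃ s₀ : (M₀.obj (X.A.sub S)).car,
      X.pi.f ((ρ.app X.A).f ((M₀.map (subIncl X.A S)).f s₀))
        = X.pi.f ((M₁.map (subIncl X.A S)).f s)

/-- `P` is a binary product of `A` and `B` in the category of `M`-algebras
(concretely: the projections induce an order isomorphism with the product poset). -/
def IsBinProd (M : OMonad) (P A B : OAlg M) : Prop :=
  ∃ (pa : OAlgHom P A) (pb : OAlgHom P B),
    Function.Bijective (fun x => (pa.h.f x, pb.h.f x)) ∧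
    ∀ x y : P.A.car, x ≤ y ↔ (pa.h.f x ≤ pa.h.f y ∧ pb.h.f x ≤ pb.h.f y)

/-- Closure of a class of algebras under binary products. -/
inductive InProdClosure (M : OMonad) (C : Set (OAlg M)) : OAlg M → Prop
  | base : ∀ A ∈ C, InProdClosure M C A
  | prod : ∀ A B P, InProdClosure M C A → InProdClosure M C B →
      IsBinProd M P A B → InProdClosure M C P

/-- `P` is a product of the family `A` of `M`-algebras. -/
def IsProdOf (M : OMonad) (P : OAlg M) {I : Type} (A : I → OAlg M) : Prop :=
  ∃ p : ∀ i, OAlgHom P (A i),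
    Function.Bijective (fun (x : P.A.car) (i : I) => (p i).h.f x) ∧
    ∀ x y : P.A.car, x ≤ y ↔ ∀ i, (p i).h.f x ≤ (p i).h.f y

/-- `B` is a quotient of `A`. -/
def IsQuotientOf (M : OMonad) (B A : OAlg M) : Prop :=
  ∃ φ : OAlgHom A B, Function.Surjective φ.h.f

/-- `B` is a subalgebra of `A` (an order embedding which is a morphism). -/
def IsSubalgebraOf (M : OMonad) (B A : OAlg M) : Prop :=
  ∃ φ : OAlgHom B A, ∀ x y : B.A.car, φ.h.f x ≤ φ.h.f y ↔ x ≤ y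

/-- A pseudo-variety (here with a single sort): a class of finitary algebras closed
under quotients, finitary subalgebras of finite products, and (the single-sorted
instance of) sort-accumulation points. -/
def PseudoVariety (M : OMonad) (V : Set (OAlg M)) : Prop :=
  (∀ X ∈ V, FinitaryAlg M X) ∧
  (∀ A ∈ V, ∀ B, IsQuotientOf M B A → B ∈ V) ∧
  (∀ (n : ℕ) (A : Fin n → OAlg M), (∀ i, A i ∈ V) →
    ∀ P, IsProdOf M P A → ∀ B, FinitaryAlg M B → IsSubalgebraOf M B P → B ∈ V) ∧
  (∀ B, FinitaryAlg M B → (∃ A ∈ V, IsQuotientOf M A B) → B ∈ V)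

/-- The inclusion of a relation, as a sub-poset, into the product poset. -/
def relIncl (A : Pos) (r : A.car → A.car → Prop) : PHom (relPos A r) (A.prod A) :=
  ⟨fun p => p.val, fun _ _ h => h⟩

/- ### Auxiliary material for the proof -/

theorem PHom.ext' {A B : Pos} {f g : PHom A B} (h : f.f = g.f) : f = g := by
  cases f; cases g; cases h; rfl

theorem phom_congr {A B : Pos} {f g : PHom A B} (h : f = g) (x : A.car) : f.f x = g.f x :=
  congrFun (congrArg PHom.f h) x

/-- If two monotone maps are pointwise comparable, so are their images under `M`. -/
theorem map_mono_pointwise (M : OMonad) (hstd : UsesStdOrder M) {A B : Pos}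
    (f g : PHom A B) (hfg : ∀ a, f.f a ≤ g.f a) (x : (M.obj A).car) :
    (M.map f).f x ≤ (M.map g).f x := by
  let h : PHom A (relPos B (fun a b => a ≤ b)) :=
    ⟨fun a => ⟨(f.f a, g.f a), hfg a⟩, fun a a' hle => ⟨f.mono hle, g.mono hle⟩⟩
  have hf : (relFst B (fun a b => a ≤ b)).comp h = f := PHom.ext' rfl
  have hg : (relSnd B (fun a b => a ≤ b)).comp h = g := PHom.ext' rfl
  rw [hstd B]
  refine ⟨(M.map h).f x, ?_, ?_⟩
  · have := phom_congr (M.map_comp h (relFst B (fun a b => a ≤ b))) x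
    rw [hf] at this
    exact this.symm
  · have := phom_congr (M.map_comp h (relSnd B (fun a b => a ≤ b))) x
    rw [hg] at this
    exact this.symm

/-- Context evaluation is monotone in the argument. -/
theorem ctxEval_mono (M : OMonad) (hstd : UsesStdOrder M) (X : OAlg M)
    (p : (M.obj X.A.addBox).car) {a b : X.A.car} (hab : a ≤ b) :
    ctxEval M X p a ≤ ctxEval M X p b := by
  refine X.pi.mono (map_mono_pointwise M hstd (substHom M X a) (substHom M X b) ?_ p)
  intro z
  cases z with
  | inl x => exact le_refl x
  | inr u => exact hab

/-- Evaluating the box context gives back the argument. -/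
theorem ctxEval_box (M : OMonad) (X : OAlg M) (a : X.A.car) :
    ctxEval M X ((M.sing X.A.addBox).f (Sum.inr PUnit.unit)) a = a := by
  show X.pi.f ((M.map (substHom M X a)).f ((M.sing X.A.addBox).f (Sum.inr PUnit.unit))) = a
  calc X.pi.f ((M.map (substHom M X a)).f ((M.sing X.A.addBox).f (Sum.inr PUnit.unit)))
      = X.pi.f (((M.map (substHom M X a)).comp (M.sing X.A.addBox)).f (Sum.inr PUnit.unit)) := rfl
    _ = X.pi.f (((M.sing X.A).comp (substHom M X a)).f (Sum.inr PUnit.unit)) := by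
          rw [M.sing_nat]
    _ = (X.pi.comp (M.sing X.A)).f a := rfl
    _ = a := phom_congr X.unit_law a

/-- The "substitute `p` for the box" auxiliary map used for composing contexts. -/
def ctxHp (M : OMonad) (X : OAlg M) (p : (M.obj X.A.addBox).car) :
    PHom X.A.addBox (M.obj X.A.addBox) :=
  ⟨Sum.elim (fun a => (M.sing X.A.addBox).f (Sum.inl a)) (fun _ => p), by
    intro x y h
    cases h with
    | inl h => exact (M.sing X.A.addBox).mono (Sum.LiftRel.inl h)
    | inr h => exact le_refl p⟩

/-- Composition of contexts: `(ctxCompose q p)[s] = q[p[s]]`. -/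
def ctxCompose (M : OMonad) (X : OAlg M) (q p : (M.obj X.A.addBox).car) :
    (M.obj X.A.addBox).car :=
  (M.flat X.A.addBox).f ((M.map (ctxHp M X p)).f q)

theorem ctxCompose_eval (M : OMonad) (X : OAlg M)
    (q p : (M.obj X.A.addBox).car) (s : X.A.car) :
    ctxEval M X (ctxCompose M X q p) s = ctxEval M X q (ctxEval M X p s) := by
  have key : (X.pi.comp (M.map (substHom M X s))).comp (ctxHp M X p)
      = substHom M X (ctxEval M X p s) := by
    apply PHom.ext'
    funext z
    cases z with
    | inl a =>
      show X.pi.f ((M.map (substHom M X s)).f ((M.sing X.A.addBox).f (Sum.inl a))) = a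
      calc X.pi.f ((M.map (substHom M X s)).f ((M.sing X.A.addBox).f (Sum.inl a)))
          = X.pi.f (((M.map (substHom M X s)).comp (M.sing X.A.addBox)).f (Sum.inl a)) := rfl
        _ = X.pi.f (((M.sing X.A).comp (substHom M X s)).f (Sum.inl a)) := by rw [M.sing_nat]
        _ = (X.pi.comp (M.sing X.A)).f a := rfl
        _ = a := phom_congr X.unit_law a
    | inr u => rfl
  show X.pi.f ((M.map (substHom M X s)).f
      ((M.flat X.A.addBox).f ((M.map (ctxHp M X p)).f q))) = _
  calc X.pi.f ((M.map (substHom M X s)).f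
        ((M.flat X.A.addBox).f ((M.map (ctxHp M X p)).f q)))
      = X.pi.f (((M.map (substHom M X s)).comp (M.flat X.A.addBox)).f
          ((M.map (ctxHp M X p)).f q)) := rfl
    _ = X.pi.f (((M.flat X.A).comp (M.map (M.map (substHom M X s)))).f
          ((M.map (ctxHp M X p)).f q)) := by rw [M.flat_nat]
    _ = (X.pi.comp (M.flat X.A)).f
          ((M.map (M.map (substHom M X s))).f ((M.map (ctxHp M X p)).f q)) := rfl
    _ = (X.pi.comp (M.map X.pi)).f
          ((M.map (M.map (substHom M X s))).f ((M.map (ctxHp M X p)).f q)) := by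
          rw [X.assoc_law]
    _ = X.pi.f (((M.map X.pi).comp (M.map (M.map (substHom M X s)))).f
          ((M.map (ctxHp M X p)).f q)) := rfl
    _ = X.pi.f ((M.map (X.pi.comp (M.map (substHom M X s)))).f
          ((M.map (ctxHp M X p)).f q)) := by rw [← M.map_comp]
    _ = X.pi.f (((M.map (X.pi.comp (M.map (substHom M X s)))).comp
          (M.map (ctxHp M X p))).f q) := rfl
    _ = X.pi.f ((M.map ((X.pi.comp (M.map (substHom M X s))).comp (ctxHp M X p))).f q) := by
          rw [← M.map_comp]
    _ = X.pi.f ((M.map (substHom M X (ctxEval M X p s))).f q) := by rw [key]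
    _ = ctxEval M X q (ctxEval M X p s) := rfl

/-- The inclusion `Σ → Σ + □`. -/
def inlHom (Sg : Pos) : PHom Sg Sg.addBox := ⟨Sum.inl, fun _ _ h => Sum.LiftRel.inl h⟩

/-- The map `(M Σ) + □ → M (Σ + □)` used for flattening contexts. -/
def thetaHom (M : OMonad) (Sg : Pos) : PHom (M.obj Sg).addBox (M.obj Sg.addBox) :=
  ⟨Sum.elim (fun u => (M.map (inlHom Sg)).f u)
    (fun _ => (M.sing Sg.addBox).f (Sum.inr PUnit.unit)), by
    intro x y h
    cases h with
    | inl h => exact (M.map (inlHom Sg)).mono h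
    | inr h => exact le_refl _⟩

/-- Flattening of a context over the free algebra into a context over the alphabet. -/
def flattenCtx (M : OMonad) (Sg : Pos) (q : (M.obj (M.obj Sg).addBox).car) :
    (M.obj Sg.addBox).car :=
  (M.flat Sg.addBox).f ((M.map (thetaHom M Sg)).f q)

theorem flattenCtx_eval (M : OMonad) (Sg : Pos) (q : (M.obj (M.obj Sg).addBox).car)
    (s : (M.obj Sg).car) :
    freeCtxEval M Sg (flattenCtx M Sg q) s = ctxEval M (M.free Sg) q s := by
  set sb := singBox M Sg
  set sub := substHom M (M.free Sg) s with hsub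
  have key : (((M.flat Sg).comp (M.map (sub.comp sb))).comp (thetaHom M Sg)) = sub := by
    apply PHom.ext'
    funext z
    cases z with
    | inl u =>
      show (M.flat Sg).f ((M.map (sub.comp sb)).f ((M.map (inlHom Sg)).f u)) = u
      have h1 : (sub.comp sb).comp (inlHom Sg) = M.sing Sg := PHom.ext' rfl
      calc (M.flat Sg).f ((M.map (sub.comp sb)).f ((M.map (inlHom Sg)).f u))
          = (M.flat Sg).f (((M.map (sub.comp sb)).comp (M.map (inlHom Sg))).f u) := rfl
        _ = (M.flat Sg).f ((M.map ((sub.comp sb).comp (inlHom Sg))).f u) := by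
              rw [← M.map_comp]
        _ = (M.flat Sg).f ((M.map (M.sing Sg)).f u) := by rw [h1]; rfl
        _ = ((M.flat Sg).comp (M.map (M.sing Sg))).f u := rfl
        _ = u := phom_congr (M.flat_map_sing Sg) u
    | inr u =>
      show (M.flat Sg).f ((M.map (sub.comp sb)).f
          ((M.sing Sg.addBox).f (Sum.inr PUnit.unit))) = sub.f (Sum.inr u)
      calc (M.flat Sg).f ((M.map (sub.comp sb)).f ((M.sing Sg.addBox).f (Sum.inr PUnit.unit)))
          = (M.flat Sg).f (((M.map (sub.comp sb)).comp (M.sing Sg.addBox)).f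
              (Sum.inr PUnit.unit)) := rfl
        _ = (M.flat Sg).f (((M.sing (M.free Sg).A).comp (sub.comp sb)).f
              (Sum.inr PUnit.unit)) := by rw [M.sing_nat]
        _ = ((M.flat Sg).comp (M.sing (M.obj Sg))).f s := rfl
        _ = s := phom_congr (M.flat_sing Sg) s
  show (M.flat Sg).f ((M.map sub).f ((M.map sb).f
      ((M.flat Sg.addBox).f ((M.map (thetaHom M Sg)).f q)))) = (M.flat Sg).f ((M.map sub).f q)
  calc (M.flat Sg).f ((M.map sub).f ((M.map sb).f
        ((M.flat Sg.addBox).f ((M.map (thetaHom M Sg)).f q))))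
      = (M.flat Sg).f (((M.map sub).comp (M.map sb)).f
          ((M.flat Sg.addBox).f ((M.map (thetaHom M Sg)).f q))) := rfl
    _ = (M.flat Sg).f ((M.map (sub.comp sb)).f
          ((M.flat Sg.addBox).f ((M.map (thetaHom M Sg)).f q))) := by
            exact congrArg (fun x => (M.flat Sg).f x) (phom_congr (M.map_comp sb sub) _).symm
    _ = (M.flat Sg).f (((M.map (sub.comp sb)).comp (M.flat Sg.addBox)).f
          ((M.map (thetaHom M Sg)).f q)) := rfl
    _ = (M.flat Sg).f (((M.flat (M.free Sg).A).comp (M.map (M.map (sub.comp sb)))).f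
          ((M.map (thetaHom M Sg)).f q)) := by rw [M.flat_nat]
    _ = ((M.flat Sg).comp (M.flat (M.obj Sg))).f
          ((M.map (M.map (sub.comp sb))).f ((M.map (thetaHom M Sg)).f q)) := rfl
    _ = ((M.flat Sg).comp (M.map (M.flat Sg))).f
          ((M.map (M.map (sub.comp sb))).f ((M.map (thetaHom M Sg)).f q)) := by
          rw [M.flat_assoc]
    _ = (M.flat Sg).f (((M.map (M.flat Sg)).comp (M.map (M.map (sub.comp sb)))).f
          ((M.map (thetaHom M Sg)).f q)) := rfl
    _ = (M.flat Sg).f ((M.map ((M.flat Sg).comp (M.map (sub.comp sb)))).f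
          ((M.map (thetaHom M Sg)).f q)) := by rw [← M.map_comp]
    _ = (M.flat Sg).f (((M.map ((M.flat Sg).comp (M.map (sub.comp sb)))).comp
          (M.map (thetaHom M Sg))).f q) := rfl
    _ = (M.flat Sg).f ((M.map ((((M.flat Sg).comp (M.map (sub.comp sb)))).comp
          (thetaHom M Sg))).f q) := by rw [← M.map_comp]
    _ = (M.flat Sg).f ((M.map sub).f q) := by rw [key]; rfl

/-- Extending an algebra morphism to the posets-with-box. -/
def homBox {A B : Pos} (f : PHom A B) : PHom A.addBox B.addBox :=
  ⟨Sum.map f.f id, by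
    intro x y h
    cases h with
    | inl h => exact Sum.LiftRel.inl (f.mono h)
    | inr h => exact Sum.LiftRel.inr h⟩

/-- Algebra morphisms commute with context evaluation. -/
theorem hom_ctxEval (M : OMonad) {Sg : Pos} {X : OAlg M}
    (φ : OAlgHom (M.free Sg) X) (q : (M.obj (M.obj Sg).addBox).car)
    (s : (M.obj Sg).car) :
    φ.h.f (ctxEval M (M.free Sg) q s)
      = ctxEval M X ((M.map (homBox φ.h)).f q) (φ.h.f s) := by
  have key : φ.h.comp (substHom M (M.free Sg) s)
      = (substHom M X (φ.h.f s)).comp (homBox φ.h) := by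
    apply PHom.ext'
    funext z
    cases z with
    | inl u => rfl
    | inr u => rfl
  show φ.h.f ((M.free Sg).pi.f ((M.map (substHom M (M.free Sg) s)).f q)) = _
  calc φ.h.f ((M.free Sg).pi.f ((M.map (substHom M (M.free Sg) s)).f q))
      = (φ.h.comp (M.free Sg).pi).f ((M.map (substHom M (M.free Sg) s)).f q) := rfl
    _ = (X.pi.comp (M.map φ.h)).f ((M.map (substHom M (M.free Sg) s)).f q) := by
          rw [φ.comm]
    _ = X.pi.f (((M.map φ.h).comp (M.map (substHom M (M.free Sg) s))).f q) := rfl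
    _ = X.pi.f ((M.map (φ.h.comp (substHom M (M.free Sg) s))).f q) := by rw [← M.map_comp]
    _ = X.pi.f ((M.map ((substHom M X (φ.h.f s)).comp (homBox φ.h))).f q) := by rw [key]
    _ = X.pi.f (((M.map (substHom M X (φ.h.f s))).comp (M.map (homBox φ.h))).f q) := by
          rw [M.map_comp]
    _ = ctxEval M X ((M.map (homBox φ.h)).f q) (φ.h.f s) := rfl
/-- Comparing syntactic congruences.  Let `K` and `L` be languages over the same
alphabet `Σ`, where `K` has a syntactic algebra `S` (given by a surjective syntactic
morphism `syn` with kernel `≼_K` and finitary index).  The following are equivalent: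
(1) `≼_K ⊆ ≼_L`;
(2) the syntactic morphism `syn` of `K` recognises `L`;
(3) every morphism recognising `K` also recognises `L`;
(4) `L` is a finite union of finite intersections of derivatives of `K`. -/
theorem comparing_syntactic_congruences (M : OMonad) (hM : Convention M)
    (Sg : Pos) (hfin : Finite Sg.car) (htriv : TrivOrder Sg)
    (K L : Set ((M.obj Sg).car))
    (S : OAlg M) (syn : OAlgHom (M.free Sg) S)
    (hsurj : Function.Surjective syn.h.f)
    (hker : ∀ s t : (M.obj Sg).car,
      syn.h.f s ≤ syn.h.f t ↔ synLe M (M.free Sg) K s t)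
    (hSfin : Finite S.A.car) :
    ((∀ s t, synLe M (M.free Sg) K s t → synLe M (M.free Sg) L s t) ↔
      Recognises syn L) ∧
    ((∀ s t, synLe M (M.free Sg) K s t → synLe M (M.free Sg) L s t) ↔
      ∀ (X : OAlg M) (φ : OAlgHom (M.free Sg) X),
        Recognises φ K → Recognises φ L) ∧
    ((∀ s t, synLe M (M.free Sg) K s t → synLe M (M.free Sg) L s t) ↔
      ∃ (m : ℕ) (n : Fin m → ℕ)
        (p : ∀ i : Fin m, Fin (n i) → (M.obj Sg.addBox).car),
        L = ⋃ i, ⋂ k, {s | freeCtxEval M Sg (p i k) s ∈ K}) := by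
  obtain ⟨-, -, -, -, hstd⟩ := hM
  -- composing a syntactic inequality with a context
  have hcomp : ∀ (J : Set ((M.obj Sg).car)) (s t : (M.obj Sg).car),
      synLe M (M.free Sg) J s t → ∀ p : (M.obj (M.obj Sg).addBox).car,
      synLe M (M.free Sg) J (ctxEval M (M.free Sg) p s) (ctxEval M (M.free Sg) p t) := by
    intro J s t hst p q hq
    have e : ∀ x y : (M.obj Sg).car, x = y → x ∈ J → y ∈ J := fun x y h hx => h ▸ hx
    exact e _ _ (ctxCompose_eval M (M.free Sg) q p t)
      (hst _ (e _ _ (ctxCompose_eval M (M.free Sg) q p s).symm hq))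
  -- the box context
  have hbox : ∀ (J : Set ((M.obj Sg).car)) (s t : (M.obj Sg).car),
      synLe M (M.free Sg) J s t → s ∈ J → t ∈ J := by
    intro J s t hst hs
    have := hst ((M.sing (M.free Sg).A.addBox).f (Sum.inr PUnit.unit))
    have e : ∀ x y : (M.obj Sg).car, x = y → x ∈ J → y ∈ J := fun x y h hx => h ▸ hx
    exact e _ _ (ctxEval_box M (M.free Sg) t) (this (e _ _ (ctxEval_box M (M.free Sg) s).symm hs))
  -- (2) → (1)
  have h21 : Recognises syn L →
      (∀ s t, synLe M (M.free Sg) K s t → synLe M (M.free Sg) L s t) := by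
    rintro ⟨P, hPup, hPL⟩ s t hst p hps
    have h1 : syn.h.f (ctxEval M (M.free Sg) p s) ≤ syn.h.f (ctxEval M (M.free Sg) p t) :=
      (hker _ _).mpr (hcomp K s t hst p)
    have h2 : syn.h.f (ctxEval M (M.free Sg) p s) ∈ P := by
      rw [hPL] at hps; exact hps
    rw [hPL]
    exact hPup _ _ h2 h1
  -- (1) → (2)
  have h12 : (∀ s t, synLe M (M.free Sg) K s t → synLe M (M.free Sg) L s t) →
      Recognises syn L := by
    intro h1
    refine ⟨{x | ∃ s ∈ L, syn.h.f s ≤ x}, ?_, ?_⟩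
    · rintro x y ⟨s, hs, hsx⟩ hxy
      exact ⟨s, hs, le_trans hsx hxy⟩
    · ext t
      constructor
      · intro ht
        exact ⟨t, ht, le_refl _⟩
      · rintro ⟨s, hs, hle⟩
        exact hbox L s t (h1 s t ((hker s t).mp hle)) hs
  -- syn recognises K
  have hrecK : Recognises syn K := by
    refine ⟨{x | ∃ s ∈ K, syn.h.f s ≤ x}, ?_, ?_⟩
    · rintro x y ⟨s, hs, hsx⟩ hxy
      exact ⟨s, hs, le_trans hsx hxy⟩
    · ext t
      constructor
      · intro ht
        exact ⟨t, ht, le_refl _⟩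
      · rintro ⟨s, hs, hle⟩
        exact hbox K s t ((hker s t).mp hle) hs
  -- (1) → (3)
  have h13 : (∀ s t, synLe M (M.free Sg) K s t → synLe M (M.free Sg) L s t) →
      ∀ (X : OAlg M) (φ : OAlgHom (M.free Sg) X),
        Recognises φ K → Recognises φ L := by
    rintro h1 X φ ⟨PK, hPKup, hPK⟩
    refine ⟨{x | ∃ s ∈ L, φ.h.f s ≤ x}, ?_, ?_⟩
    · rintro x y ⟨s, hs, hsx⟩ hxy
      exact ⟨s, hs, le_trans hsx hxy⟩
    · ext t
      constructor
      · intro ht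
        exact ⟨t, ht, le_refl _⟩
      · rintro ⟨s, hs, hle⟩
        have hKst : synLe M (M.free Sg) K s t := by
          intro q hq
          have hqs : φ.h.f (ctxEval M (M.free Sg) q s) ∈ PK := by
            rw [hPK] at hq; exact hq
          have hmono : φ.h.f (ctxEval M (M.free Sg) q s)
              ≤ φ.h.f (ctxEval M (M.free Sg) q t) := by
            rw [hom_ctxEval M φ q s, hom_ctxEval M φ q t]
            exact ctxEval_mono M hstd X _ hle
          rw [hPK]
          exact hPKup _ _ hqs hmono
        exact hbox L s t (h1 s t hKst) hs
  -- (1) → (4)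
  have h14 : (∀ s t, synLe M (M.free Sg) K s t → synLe M (M.free Sg) L s t) →
      ∃ (m : ℕ) (n : Fin m → ℕ)
        (p : ∀ i : Fin m, Fin (n i) → (M.obj Sg.addBox).car),
        L = ⋃ i, ⋂ k, {s | freeCtxEval M Sg (p i k) s ∈ K} := by
    intro h1
    obtain ⟨P, hPup, hPL⟩ := h12 h1
    haveI := hSfin
    obtain ⟨m, e, he⟩ := (Set.toFinite P).fin_embedding
    have hY : ∀ i : Fin m, ∃ (n : ℕ) (f : Fin n ↪ S.A.car),
        Set.range f = {y | ¬ e i ≤ y} := fun i => (Set.toFinite _).fin_embedding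
    choose n f hf using hY
    choose sec hsec using hsurj
    have hsep : ∀ (i : Fin m) (k : Fin (n i)),
        ∃ q : (M.obj (M.obj Sg).addBox).car,
          ctxEval M (M.free Sg) q (sec (e i)) ∈ K ∧
          ctxEval M (M.free Sg) q (sec (f i k)) ∉ K := by
      intro i k
      by_contra hcon
      push_neg at hcon
      have hle : syn.h.f (sec (e i)) ≤ syn.h.f (sec (f i k)) :=
        (hker _ _).mpr (fun q hq => hcon q hq)
      rw [hsec, hsec] at hle
      have : f i k ∈ Set.range (f i) := ⟨k, rfl⟩
      rw [hf i] at this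
      exact this hle
    choose q hq1 hq2 using hsep
    refine ⟨m, n, fun i k => flattenCtx M Sg (q i k), ?_⟩
    ext t
    simp only [Set.mem_iUnion, Set.mem_iInter, Set.mem_setOf_eq]
    constructor
    · intro ht
      have htP : syn.h.f t ∈ P := by rw [hPL] at ht; exact ht
      obtain ⟨i, hi⟩ : syn.h.f t ∈ Set.range e := by rw [he]; exact htP
      refine ⟨i, fun k => ?_⟩
      rw [flattenCtx_eval]
      have hle : syn.h.f (sec (e i)) ≤ syn.h.f t := by
        rw [hsec, hi]
      exact (hker _ _).mp hle _ (hq1 i k)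
    · rintro ⟨i, hik⟩
      have heiP : e i ∈ P := by rw [← he]; exact ⟨i, rfl⟩
      have hle : e i ≤ syn.h.f t := by
        by_contra hnle
        have : syn.h.f t ∈ Set.range (f i) := by rw [hf i]; exact hnle
        obtain ⟨k, hk⟩ := this
        have h1k := hik k
        rw [flattenCtx_eval] at h1k
        have hle2 : syn.h.f t ≤ syn.h.f (sec (f i k)) := by
          rw [hsec, hk]
        exact hq2 i k ((hker _ _).mp hle2 _ h1k)
      rw [hPL]
      exact hPup _ _ heiP hle
  -- (4) → (1)
  have h41 : (∃ (m : ℕ) (n : Fin m → ℕ)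
        (p : ∀ i : Fin m, Fin (n i) → (M.obj Sg.addBox).car),
        L = ⋃ i, ⋂ k, {s | freeCtxEval M Sg (p i k) s ∈ K}) →
      (∀ s t, synLe M (M.free Sg) K s t → synLe M (M.free Sg) L s t) := by
    rintro ⟨m, n, p, hL⟩ s t hst r hr
    rw [hL] at hr ⊢
    change @id (M.obj Sg).car (ctxEval M (M.free Sg) r s) ∈ (⋃ i, ⋂ k, {s | freeCtxEval M Sg (p i k) s ∈ K} : Set (M.obj Sg).car) at hr
    change @id (M.obj Sg).car (ctxEval M (M.free Sg) r t) ∈ (⋃ i, ⋂ k, {s | freeCtxEval M Sg (p i k) s ∈ K} : Set (M.obj Sg).car)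
    simp only [Set.mem_iUnion, Set.mem_iInter, Set.mem_setOf_eq] at hr ⊢
    obtain ⟨i, hi⟩ := hr
    refine ⟨i, fun k => ?_⟩
    exact hcomp K s t hst r _ (hi k)
  exact ⟨⟨h12, h21⟩, ⟨h13, fun h3 => h21 (h3 S syn hrecK)⟩, ⟨h14, h41⟩⟩
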